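/- Fix m attributes with nonempty finite domains D a for a : Fin m, Tup := Π (a : Fin m), D a, weights x : Π (a : Fin m), D a → ℝ, a multiplier y : Tup → ℝ, tuple weights w t := (∏_a x a (t a)) · y t, and P := Σ_{t : Tup} w t. Assume n ≥ 1 and P ≠ 0, and let Pr(f) := (∏_{s : Fin n} w (f s)) / P^n for instances f : Fin n → Tup. For finite subsets T a ⊆ D a, one per attribute a, define x' by x' a v := if v ∈ T a then x a v else 0. Then Σ_{f : Fin n → Tup} Pr(f) · |{s : Fin n | ∀ a, f s a ∈ T a}| = (n / P) · Σ_{t : Tup} (∏_a x' a (t a)) · y t; i.e., the expected answer of a conjunctive range query equals n/P times the evaluation of the summary polynomial with all out-of-range one-dimensional variables set to 0. -/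

import Mathlib

set_option maxHeartbeats 1000000 in
/-- The expected answer of a conjunctive range query equals `n/P` times the
evaluation of the summary with all out-of-range one-dimensional variables set to 0. -/
theorem stmt_11 (m n : ℕ) (hn : 1 ≤ n) (D : Fin m → Type*)
    [∀ a, Fintype (D a)] [∀ a, DecidableEq (D a)] [∀ a, Nonempty (D a)]
    (x : ∀ a : Fin m, D a → ℝ) (y : (∀ a : Fin m, D a) → ℝ)
    (w : (∀ a : Fin m, D a) → ℝ)
    (hw : ∀ t : ∀ a : Fin m, D a, w t = (∏ a : Fin m, x a (t a)) * y t)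
    (P : ℝ) (hP : P = ∑ t : ∀ a : Fin m, D a, w t) (hP0 : P ≠ 0)
    (T : ∀ a : Fin m, Finset (D a))
    (x' : ∀ a : Fin m, D a → ℝ)
    (hx' : ∀ (a : Fin m) (v : D a), x' a v = if v ∈ T a then x a v else 0) :
    ∑ f : Fin n → ∀ a : Fin m, D a,
        ((∏ s : Fin n, w (f s)) / P ^ n) *
          ((Finset.univ.filter (fun s : Fin n => ∀ a : Fin m, f s a ∈ T a)).card : ℝ) =
      ((n : ℝ) / P) * ∑ t : ∀ a : Fin m, D a, (∏ a : Fin m, x' a (t a)) * y t := by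
  classical
  set Q : ℝ := ∑ t : ∀ a : Fin m, D a,
      w t * (if ∀ a, t a ∈ T a then (1:ℝ) else 0) with hQdef
  -- identify RHS sum with Q
  have hQ : ∑ t : ∀ a : Fin m, D a, (∏ a : Fin m, x' a (t a)) * y t = Q := by
    refine Finset.sum_congr rfl fun t _ => ?_
    rw [hw]
    by_cases h : ∀ a, t a ∈ T a
    · have hpr : ∏ a : Fin m, x' a (t a) = ∏ a : Fin m, x a (t a) :=
        Finset.prod_congr rfl fun a _ => by rw [hx', if_pos (h a)]
      rw [hpr, if_pos h, mul_one]
    · push_neg at h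
      obtain ⟨a, ha⟩ := h
      rw [Finset.prod_eq_zero (Finset.mem_univ a) (by rw [hx', if_neg ha])]
      simp only [if_neg (by push_neg; exact ⟨a, ha⟩ : ¬ ∀ a, t a ∈ T a)]
      ring
  -- key computation for each position s₀
  have key : ∀ s₀ : Fin n,
      (∑ f : Fin n → ∀ a : Fin m, D a,
        (∏ s : Fin n, w (f s)) * (if ∀ a, f s₀ a ∈ T a then (1:ℝ) else 0))
        = Q * P ^ (n-1) := by
    intro s₀
    have h1 : ∀ f : Fin n → ∀ a : Fin m, D a,
        (∏ s : Fin n, w (f s)) * (if ∀ a, f s₀ a ∈ T a then (1:ℝ) else 0)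
        = ∏ s : Fin n,
            (w (f s) * (if s = s₀ then (if ∀ a, f s a ∈ T a then (1:ℝ) else 0) else 1)) := by
      intro f
      rw [Finset.prod_mul_distrib]
      congr 1
      rw [Finset.prod_ite_eq' Finset.univ s₀
        (fun s => if ∀ a, f s a ∈ T a then (1:ℝ) else 0)]
      simp
    calc (∑ f : Fin n → ∀ a : Fin m, D a,
        (∏ s : Fin n, w (f s)) * (if ∀ a, f s₀ a ∈ T a then (1:ℝ) else 0))
        = ∑ f : Fin n → ∀ a : Fin m, D a, ∏ s : Fin n,
            (w (f s) * (if s = s₀ then (if ∀ a, f s a ∈ T a then (1:ℝ) else 0) else 1)) :=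
          Finset.sum_congr rfl fun f _ => h1 f
      _ = ∏ s : Fin n, ∑ t : ∀ a : Fin m, D a,
            (w t * (if s = s₀ then (if ∀ a, t a ∈ T a then (1:ℝ) else 0) else 1)) :=
          (Fintype.prod_sum
            (fun (s : Fin n) (t : ∀ a : Fin m, D a) =>
              w t * (if s = s₀ then (if ∀ a, t a ∈ T a then (1:ℝ) else 0) else 1))).symm
      _ = ∏ s : Fin n, (if s = s₀ then Q else P) := by
          refine Finset.prod_congr rfl fun s _ => ?_
          by_cases hs : s = s₀ <;> simp [hs, hQdef, hP]
      _ = Q * P ^ (n-1) := by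
          rw [← Finset.mul_prod_erase Finset.univ _ (Finset.mem_univ s₀)]
          rw [if_pos rfl]
          congr 1
          rw [Finset.prod_congr rfl
            (fun s hs => if_neg (Finset.ne_of_mem_erase hs)), Finset.prod_const,
            Finset.card_erase_of_mem (Finset.mem_univ s₀), Finset.card_univ,
            Fintype.card_fin]
  have hcard : ∀ f : Fin n → ∀ a : Fin m, D a,
      ((Finset.univ.filter (fun s : Fin n => ∀ a : Fin m, f s a ∈ T a)).card : ℝ)
      = ∑ s : Fin n, (if ∀ a, f s a ∈ T a then (1:ℝ) else 0) := by
    intro f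
    rw [Finset.card_filter]
    push_cast
    rfl
  calc ∑ f : Fin n → ∀ a : Fin m, D a,
        ((∏ s : Fin n, w (f s)) / P ^ n) *
          ((Finset.univ.filter (fun s : Fin n => ∀ a : Fin m, f s a ∈ T a)).card : ℝ)
      = ∑ f : Fin n → ∀ a : Fin m, D a, ∑ s : Fin n,
          ((∏ s' : Fin n, w (f s')) * (if ∀ a, f s a ∈ T a then (1:ℝ) else 0)) / P ^ n := by
        refine Finset.sum_congr rfl fun f _ => ?_
        rw [hcard, Finset.mul_sum]
        refine Finset.sum_congr rfl fun s _ => ?_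
        ring
    _ = ∑ s : Fin n, (∑ f : Fin n → ∀ a : Fin m, D a,
          ((∏ s' : Fin n, w (f s')) * (if ∀ a, f s a ∈ T a then (1:ℝ) else 0))) / P ^ n := by
        rw [Finset.sum_comm]
        exact Finset.sum_congr rfl fun s _ => (Finset.sum_div _ _ _).symm
    _ = ∑ s : Fin n, Q * P ^ (n-1) / P ^ n := Finset.sum_congr rfl fun s _ => by rw [key s]
    _ = (n : ℝ) * (Q * P ^ (n-1) / P ^ n) := by
        rw [Finset.sum_const, Finset.card_univ, Fintype.card_fin, nsmul_eq_mul]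
    _ = ((n : ℝ) / P) * Q := by
        have hpow : P ^ n = P ^ (n-1) * P := by
          conv_lhs => rw [show n = (n-1) + 1 from (Nat.succ_pred_eq_of_pos hn).symm]
          rw [pow_succ]
        rw [hpow]
        have : P ^ (n-1) ≠ 0 := pow_ne_zero _ hP0
        field_simp
    _ = ((n : ℝ) / P) * ∑ t : ∀ a : Fin m, D a, (∏ a : Fin m, x' a (t a)) * y t := by
        rw [hQ]
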